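/- For a unit vector k, the matrix exponential of φ·H(k) equals Rodrigues' formula: exp(φ·H(k)) = I + sin(φ)·H(k) + (1 − cos φ)·H(k)². -/

import Mathlib

open Matrix

noncomputable def Hm (B : Fin 3 → ℝ) : Matrix (Fin 3) (Fin 3) ℝ :=
  !![0, B 2, -(B 1); -(B 2), 0, B 0; B 1, -(B 0), 0]

attribute [local instance] Matrix.linftyOpNormedRing Matrix.linftyOpNormedAlgebra

lemma Hm_cube (k : Fin 3 → ℝ) (hk : ∑ i, k i ^ 2 = 1) :
    Hm k * Hm k * Hm k = -Hm k := by
  have hk' : k 0 ^ 2 + k 1 ^ 2 + k 2 ^ 2 = 1 := by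
    simpa [Fin.sum_univ_three] using hk
  ext i j
  fin_cases i <;> fin_cases j <;>
    simp [Hm, Matrix.mul_apply, Fin.sum_univ_three] <;>
    first
      | ring1
      | linear_combination (k 0) * hk'
      | linear_combination (-(k 0)) * hk'
      | linear_combination (k 1) * hk'
      | linear_combination (-(k 1)) * hk'
      | linear_combination (k 2) * hk'
      | linear_combination (-(k 2)) * hk'

theorem stmt14 (k : Fin 3 → ℝ) (hk : ∑ i, k i ^ 2 = 1) (φ : ℝ) :
    NormedSpace.exp (φ • Hm k) =
      1 + Real.sin φ • Hm k + (1 - Real.cos φ) • (Hm k * Hm k) := by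
  set A := Hm k with hA
  have h3 : A * A * A = -A := Hm_cube k hk
  set f : ℝ → Matrix (Fin 3) (Fin 3) ℝ :=
    fun t => 1 + Real.sin t • A + (1 - Real.cos t) • (A * A) with hf
  have hf' : ∀ t, HasDerivAt f (Real.cos t • A + Real.sin t • (A * A)) t := by
    intro t
    have h1 : HasDerivAt (fun t : ℝ => Real.sin t • A) (Real.cos t • A) t :=
      (Real.hasDerivAt_sin t).smul_const A
    have h2 : HasDerivAt (fun t : ℝ => (1 - Real.cos t) • (A * A))
        (Real.sin t • (A * A)) t := by
      have := ((hasDerivAt_const t (1:ℝ)).sub (Real.hasDerivAt_cos t)).smul_const (A * A)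
      simp at this
      exact this
    have := ((hasDerivAt_const t (1 : Matrix (Fin 3) (Fin 3) ℝ)).add h1).add h2
    simp at this
    exact this
  have hAf : ∀ t, A * f t = Real.cos t • A + Real.sin t • (A * A) := by
    intro t
    simp only [hf, mul_add, mul_one, Matrix.mul_smul]
    rw [← mul_assoc, h3]
    module
  have hg : ∀ t, HasDerivAt
      (fun t => NormedSpace.exp ((-t) • A) * f t) 0 t := by
    intro t
    have hexp : HasDerivAt (fun t : ℝ => NormedSpace.exp ((-t) • A))
        (-(A * NormedSpace.exp ((-t) • A))) t := by
      have h := (hasDerivAt_exp_smul_const' (𝕂 := ℝ) A (-t)).scomp t (hasDerivAt_neg t)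
      simp [Function.comp_def] at h ⊢
      exact h
    have := hexp.mul (hf' t)
    have hcomm : NormedSpace.exp ((-t) • A) * A = A * NormedSpace.exp ((-t) • A) :=
      ((Commute.refl A).smul_left (-t)).exp_left
    rw [show (-(A * NormedSpace.exp ((-t) • A))) * f t
          + NormedSpace.exp ((-t) • A) * (Real.cos t • A + Real.sin t • (A * A))
        = NormedSpace.exp ((-t) • A) * (Real.cos t • A + Real.sin t • (A * A))
          - A * NormedSpace.exp ((-t) • A) * f t by rw [neg_mul]; abel] at this
    rw [← hcomm, mul_assoc, hAf t, sub_self] at this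
    exact this
  have hconst : ∀ t : ℝ, NormedSpace.exp ((-t) • A) * f t
      = NormedSpace.exp ((-(0:ℝ)) • A) * f 0 := by
    intro t
    have : ∀ x : ℝ, HasDerivAt (fun t => NormedSpace.exp ((-t) • A) * f t) 0 x := hg
    exact is_const_of_deriv_eq_zero (fun x => (this x).differentiableAt)
      (fun x => (this x).deriv) t 0
  have h0 : NormedSpace.exp ((-(0:ℝ)) • A) * f 0 = 1 := by
    simp [hf, NormedSpace.exp_zero]
  have key : NormedSpace.exp ((-φ) • A) * f φ = 1 := (hconst φ).trans h0
  have hinv : NormedSpace.exp (φ • A) * NormedSpace.exp ((-φ) • A) = 1 := by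
    rw [← Matrix.exp_add_of_commute]
    · simp
    · exact ((Commute.refl A).smul_left φ).smul_right (-φ)
  calc NormedSpace.exp (φ • A)
      = NormedSpace.exp (φ • A) * (NormedSpace.exp ((-φ) • A) * f φ) := by
        rw [key, mul_one]
    _ = (NormedSpace.exp (φ • A) * NormedSpace.exp ((-φ) • A)) * f φ := by
        rw [mul_assoc]
    _ = f φ := by rw [hinv, one_mul]
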